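/- arXiv:1209.4114 — 4 statements merged into one kernel-verified Lean document; each statement's English description precedes it below -/
import Mathlib

section
/- Let (V, •, I; ω) be a semiunital semimonoidal category in which I is firm (ω_I : I → I•I is an isomorphism). Then: (i) if X and Y are firm objects, so is X•Y; and (ii) the full subcategory of V on the firm objects is a monoidal category with tensor product •, unit object I, associator γ, left unitor λ_X = ω_X^{-1} : I•X → X and right unitor ρ_X = ω_X^{-1}∘℘_X : X•I → X. -/
open CategoryTheory

universe v u

/-- A semiunital semimonoidal category structure on a category `V`:
a bifunctor `t` (written `•` in the paper) with associator `γ` satisfying the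
pentagon coherence, a semiunit object `I` with a natural transformation
`ω : X ⟶ I • X` and natural isomorphisms `ℓ : I • X ≅ X • I` (with inverse
`℘ = ℓ.inv`) such that `ℓ_I = ℘_I`, `ℓ` is compatible with the associator, and
`ω_{X•Y}` coincides, up to the associator isomorphisms, with both `ω_X • Y`
and `X • ω_Y`. -/
structure SSM (V : Type u) [Category.{v} V] where
  /-- the tensor (semimonoidal) product on objects -/
  t : V → V → V
  /-- the tensor product on morphisms -/
  tmap : ∀ {X X' Y Y' : V}, (X ⟶ X') → (Y ⟶ Y') → (t X Y ⟶ t X' Y')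
  tmap_id : ∀ X Y : V, tmap (𝟙 X) (𝟙 Y) = 𝟙 (t X Y)
  tmap_comp : ∀ {X X' X'' Y Y' Y'' : V} (f : X ⟶ X') (f' : X' ⟶ X'')
    (g : Y ⟶ Y') (g' : Y' ⟶ Y''),
    tmap (f ≫ f') (g ≫ g') = tmap f g ≫ tmap f' g'
  /-- the associator -/
  γ : ∀ X Y Z : V, t (t X Y) Z ≅ t X (t Y Z)
  γ_nat : ∀ {X X' Y Y' Z Z' : V} (f : X ⟶ X') (g : Y ⟶ Y') (h : Z ⟶ Z'),
    tmap (tmap f g) h ≫ (γ X' Y' Z').hom = (γ X Y Z).hom ≫ tmap f (tmap g h)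
  pentagon : ∀ W X Y Z : V,
    tmap (γ W X Y).hom (𝟙 Z) ≫ (γ W (t X Y) Z).hom ≫ tmap (𝟙 W) (γ X Y Z).hom
      = (γ (t W X) Y Z).hom ≫ (γ W X (t Y Z)).hom
  /-- the semiunit object -/
  I : V
  /-- the semiunit natural transformation `ω_X : X ⟶ I • X` -/
  ω : ∀ X : V, X ⟶ t I X
  ω_nat : ∀ {X Y : V} (f : X ⟶ Y), f ≫ ω Y = ω X ≫ tmap (𝟙 I) f
  /-- the natural isomorphism `ℓ_X : I • X ≅ X • I` (with inverse `℘_X`) -/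
  ℓ : ∀ X : V, t I X ≅ t X I
  ℓ_nat : ∀ {X Y : V} (f : X ⟶ Y), tmap (𝟙 I) f ≫ (ℓ Y).hom = (ℓ X).hom ≫ tmap f (𝟙 I)
  ℓ_I : (ℓ I).hom = (ℓ I).inv
  ℓ_assoc : ∀ X Y : V,
    (γ I X Y).hom ≫ (ℓ (t X Y)).hom ≫ (γ X Y I).hom
      = tmap (ℓ X).hom (𝟙 Y) ≫ (γ X I Y).hom ≫ tmap (𝟙 X) (ℓ Y).hom
  ω_left : ∀ X Y : V, tmap (ω X) (𝟙 Y) ≫ (γ I X Y).hom = ω (t X Y)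
  ω_right : ∀ X Y : V,
    tmap (𝟙 X) (ω Y) ≫ (γ X I Y).inv ≫ tmap (ℓ X).inv (𝟙 Y) ≫ (γ I X Y).hom = ω (t X Y)

section Aux

variable {V : Type u} [Category.{v} V]

lemma SSM.tmap_isIso (S : SSM V) {X X' Y Y' : V} (f : X ⟶ X') (g : Y ⟶ Y')
    [IsIso f] [IsIso g] : IsIso (S.tmap f g) :=
  ⟨S.tmap (inv f) (inv g),
    by rw [← S.tmap_comp, IsIso.hom_inv_id, IsIso.hom_inv_id, S.tmap_id],
    by rw [← S.tmap_comp, IsIso.inv_hom_id, IsIso.inv_hom_id, S.tmap_id]⟩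

end Aux

/-- If `I` is firm then the firm objects are closed under the tensor product,
and the full subcategory of firm objects is monoidal with unit `I`, associator
`γ`, left unitor `λ_X = ω_X⁻¹` and right unitor `ρ_X = ω_X⁻¹ ∘ ℘_X`: the
unitors are natural and satisfy the triangle identity. -/
theorem firm_monoidal {V : Type u} [Category.{v} V] (S : SSM V) [IsIso (S.ω S.I)] :
    -- (i) firm objects are closed under the tensor product
    (∀ X Y : V, IsIso (S.ω X) → IsIso (S.ω Y) → IsIso (S.ω (S.t X Y))) ∧
    -- (ii) left unitor naturality
    (∀ (X Y : V) [IsIso (S.ω X)] [IsIso (S.ω Y)] (f : X ⟶ Y),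
      S.tmap (𝟙 S.I) f ≫ inv (S.ω Y) = inv (S.ω X) ≫ f) ∧
    -- right unitor naturality
    (∀ (X Y : V) [IsIso (S.ω X)] [IsIso (S.ω Y)] (f : X ⟶ Y),
      S.tmap f (𝟙 S.I) ≫ ((S.ℓ Y).inv ≫ inv (S.ω Y)) = ((S.ℓ X).inv ≫ inv (S.ω X)) ≫ f) ∧
    -- the triangle identity
    (∀ (X Y : V) [IsIso (S.ω X)] [IsIso (S.ω Y)],
      (S.γ X S.I Y).hom ≫ S.tmap (𝟙 X) (inv (S.ω Y))
        = S.tmap ((S.ℓ X).inv ≫ inv (S.ω X)) (𝟙 Y)) ∧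
    -- the unit coherence `λ_I = ρ_I`
    (inv (S.ω S.I) = (S.ℓ S.I).inv ≫ inv (S.ω S.I)) := by
  -- `h1`: comparing `ω_left` and `ω_right` after cancelling `γ`
  have h1 : ∀ X Y : V, S.tmap (𝟙 X) (S.ω Y) ≫ (S.γ X S.I Y).inv ≫ S.tmap (S.ℓ X).inv (𝟙 Y)
      = S.tmap (S.ω X) (𝟙 Y) := by
    intro X Y
    have h := (S.ω_right X Y).trans (S.ω_left X Y).symm
    rw [← cancel_mono (S.γ S.I X Y).hom]
    simpa using h
  -- (i) firm objects are closed under the tensor product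
  have firmT : ∀ X Y : V, IsIso (S.ω X) → IsIso (S.ω Y) → IsIso (S.ω (S.t X Y)) := by
    intro X Y hX hY
    haveI := hX
    haveI : IsIso (S.tmap (S.ω X) (𝟙 Y)) := S.tmap_isIso _ _
    rw [← S.ω_left X Y]
    infer_instance
  -- left unitor naturality
  have lnat : ∀ (X Y : V) [IsIso (S.ω X)] [IsIso (S.ω Y)] (f : X ⟶ Y),
      S.tmap (𝟙 S.I) f ≫ inv (S.ω Y) = inv (S.ω X) ≫ f := by
    intro X Y hX hY f
    rw [IsIso.comp_inv_eq, Category.assoc, S.ω_nat f, IsIso.inv_hom_id_assoc]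
  -- right unitor naturality
  have rnat : ∀ (X Y : V) [IsIso (S.ω X)] [IsIso (S.ω Y)] (f : X ⟶ Y),
      S.tmap f (𝟙 S.I) ≫ ((S.ℓ Y).inv ≫ inv (S.ω Y)) = ((S.ℓ X).inv ≫ inv (S.ω X)) ≫ f := by
    intro X Y hX hY f
    have h : (S.ℓ X).inv ≫ S.tmap (𝟙 S.I) f = S.tmap f (𝟙 S.I) ≫ (S.ℓ Y).inv := by
      rw [Iso.inv_comp_eq, ← Category.assoc, ← S.ℓ_nat f, Category.assoc, Iso.hom_inv_id,
        Category.comp_id]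
    rw [← Category.assoc, ← h, Category.assoc, lnat X Y f, Category.assoc]
  -- the triangle identity
  have tri : ∀ (X Y : V) [IsIso (S.ω X)] [IsIso (S.ω Y)],
      (S.γ X S.I Y).hom ≫ S.tmap (𝟙 X) (inv (S.ω Y))
        = S.tmap ((S.ℓ X).inv ≫ inv (S.ω X)) (𝟙 Y) := by
    intro X Y hX hY
    have hXinv : S.tmap (S.ω X) (𝟙 Y) ≫ S.tmap (inv (S.ω X)) (𝟙 Y) = 𝟙 _ := by
      rw [← S.tmap_comp, IsIso.hom_inv_id, Category.comp_id, S.tmap_id]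
    have hYinv : S.tmap (𝟙 X) (inv (S.ω Y)) ≫ S.tmap (𝟙 X) (S.ω Y) = 𝟙 _ := by
      rw [← S.tmap_comp, IsIso.inv_hom_id, Category.comp_id, S.tmap_id]
    have h1' : (S.γ X S.I Y).inv ≫ S.tmap (S.ℓ X).inv (𝟙 Y)
        = S.tmap (𝟙 X) (inv (S.ω Y)) ≫ S.tmap (S.ω X) (𝟙 Y) := by
      rw [← h1 X Y, ← Category.assoc, hYinv, Category.id_comp]
    have e : S.tmap ((S.ℓ X).inv ≫ inv (S.ω X)) (𝟙 Y)
        = S.tmap (S.ℓ X).inv (𝟙 Y) ≫ S.tmap (inv (S.ω X)) (𝟙 Y) := by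
      rw [← S.tmap_comp, Category.comp_id]
    rw [e, ← cancel_epi (S.γ X S.I Y).inv, Iso.inv_hom_id_assoc, ← Category.assoc, h1',
      Category.assoc, hXinv, Category.comp_id]
  refine ⟨firmT, lnat, rnat, tri, ?_⟩
  -- unit coherence: first, `ω_{I•I} = I • ω_I`
  have ωII : S.ω (S.t S.I S.I) = S.tmap (𝟙 S.I) (S.ω S.I) := by
    rw [← cancel_epi (S.ω S.I)]
    exact S.ω_nat _
  haveI : IsIso (S.ω (S.t S.I S.I)) := by
    rw [ωII]; exact S.tmap_isIso _ _
  haveI : IsIso (S.tmap (S.ω S.I) (𝟙 S.I)) := S.tmap_isIso _ _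
  have hC : S.tmap (S.ω S.I) (𝟙 S.I) ≫ (S.γ S.I S.I S.I).hom = S.tmap (𝟙 S.I) (S.ω S.I) :=
    (S.ω_left _ _).trans ωII
  -- `℘_I • I = 𝟙`
  have hD : S.tmap (S.ℓ S.I).inv (𝟙 S.I) = 𝟙 _ := by
    rw [← cancel_epi (S.tmap (S.ω S.I) (𝟙 S.I)), Category.comp_id]
    calc S.tmap (S.ω S.I) (𝟙 S.I) ≫ S.tmap (S.ℓ S.I).inv (𝟙 S.I)
        = (S.tmap (𝟙 S.I) (S.ω S.I) ≫ (S.γ S.I S.I S.I).inv) ≫ S.tmap (S.ℓ S.I).inv (𝟙 S.I) := by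
          rw [← hC]; simp only [Category.assoc, Iso.hom_inv_id_assoc]
      _ = S.tmap (S.ω S.I) (𝟙 S.I) := by rw [Category.assoc]; exact h1 S.I S.I
  -- `I • ℓ_I = 𝟙`
  have hE : S.tmap (𝟙 S.I) (S.ℓ S.I).hom = 𝟙 _ := by
    rw [← cancel_mono (S.ℓ (S.t S.I S.I)).hom, Category.id_comp, S.ℓ_nat, S.ℓ_I, hD,
      Category.comp_id]
  -- `ω_I ≫ ℓ_I = ω_I`
  have hF : S.ω S.I ≫ (S.ℓ S.I).hom = S.ω S.I := by
    rw [← cancel_mono (S.ω (S.t S.I S.I))]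
    have e1 := S.ω_nat (S.ω S.I ≫ (S.ℓ S.I).hom)
    have e2 := S.ω_nat (S.ω S.I)
    rw [e1, e2]
    have e3 : S.tmap (𝟙 S.I) (S.ω S.I ≫ (S.ℓ S.I).hom)
        = S.tmap (𝟙 S.I ≫ 𝟙 S.I) (S.ω S.I ≫ (S.ℓ S.I).hom) := by rw [Category.id_comp]
    rw [e3, S.tmap_comp, hE, Category.comp_id]
  have hF' : S.ω S.I ≫ (S.ℓ S.I).inv = S.ω S.I := by rw [← S.ℓ_I]; exact hF
  rw [← cancel_epi (S.ω S.I), IsIso.hom_inv_id, ← Category.assoc, hF', IsIso.hom_inv_id]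
end

section
/- Let (A, μ, η) be a semimonoid in a semiunital semimonoidal category (V, •, I; ω) and let J = I•−. Define natural transformations μ̂ with components μ̂_X = (X•μ)∘γ_{X,A,A} : (X•A)•A → X•A and ν̂ with components ν̂_X = (X•η)∘ℓ_X : I•X → X•A. Then (−•A, μ̂, ω, ν̂; J) is a J-monad on V. -/
open CategoryTheory

universe v u

variable {V : Type u} [Category.{v} V]

/-- `μ̂_X = (X • μ) ∘ γ_{X,A,A}`. -/
def mhat (S : SSM V) {A : V} (μ : S.t A A ⟶ A) (X : V) : S.t (S.t X A) A ⟶ S.t X A :=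
  (S.γ X A A).hom ≫ S.tmap (𝟙 X) μ

/-- `ν̂_X = (X • η) ∘ ℓ_X`. -/
def nhat (S : SSM V) {A : V} (η : S.I ⟶ A) (X : V) : S.t S.I X ⟶ S.t X A :=
  (S.ℓ X).hom ≫ S.tmap (𝟙 X) η

section Aux

variable (S : SSM V)

lemma SSM.tmap_comp_right {X Y Y' Y'' : V} (g : Y ⟶ Y') (g' : Y' ⟶ Y'') :
    S.tmap (𝟙 X) (g ≫ g') = S.tmap (𝟙 X) g ≫ S.tmap (𝟙 X) g' := by
  rw [← S.tmap_comp]; simp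

lemma SSM.tmap_comp_left {X X' X'' Y : V} (f : X ⟶ X') (f' : X' ⟶ X'') :
    S.tmap (f ≫ f') (𝟙 Y) = S.tmap f (𝟙 Y) ≫ S.tmap f' (𝟙 Y) := by
  rw [← S.tmap_comp]; simp

lemma SSM.tmap_exch {X X' Y Y' : V} (f : X ⟶ X') (g : Y ⟶ Y') :
    S.tmap f (𝟙 Y) ≫ S.tmap (𝟙 X') g = S.tmap (𝟙 X) g ≫ S.tmap f (𝟙 Y') := by
  rw [← S.tmap_comp, ← S.tmap_comp]; simp

lemma SSM.tmap_hom_inv_left {X X' Y : V} (e : X ≅ X') :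
    S.tmap e.hom (𝟙 Y) ≫ S.tmap e.inv (𝟙 Y) = 𝟙 (S.t X Y) := by
  rw [← S.tmap_comp]; simp [S.tmap_id]

end Aux

/-- For a semimonoid `(A, μ, η)` in a semiunital semimonoidal category,
`(− • A, μ̂, ω, ν̂; J)` is a `J`-monad (with `J = I • −`): `μ̂` and `ν̂` are
natural and satisfy the associativity and semiunit laws. -/
theorem semimonoid_gives_JMonad (S : SSM V) (A : V)
    (μ : S.t A A ⟶ A) (η : S.I ⟶ A)
    (hassoc : S.tmap μ (𝟙 A) ≫ μ = (S.γ A A A).hom ≫ S.tmap (𝟙 A) μ ≫ μ)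
    (hunit_l : S.tmap η (𝟙 A) ≫ μ ≫ S.ω A = 𝟙 (S.t S.I A))
    (hunit_r : (S.ℓ A).hom ≫ S.tmap (𝟙 A) η ≫ μ ≫ S.ω A = 𝟙 (S.t S.I A)) :
    -- naturality of `μ̂`
    (∀ (X X' : V) (f : X ⟶ X'),
      S.tmap (S.tmap f (𝟙 A)) (𝟙 A) ≫ mhat S μ X' = mhat S μ X ≫ S.tmap f (𝟙 A)) ∧
    -- naturality of `ν̂`
    (∀ (X X' : V) (f : X ⟶ X'),
      S.tmap (𝟙 S.I) f ≫ nhat S η X' = nhat S η X ≫ S.tmap f (𝟙 A)) ∧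
    -- associativity: `μ̂ ∘ Mμ̂ = μ̂ ∘ μ̂M`
    (∀ X : V, S.tmap (mhat S μ X) (𝟙 A) ≫ mhat S μ X = mhat S μ (S.t X A) ≫ mhat S μ X) ∧
    -- semiunit law `(ωM) ∘ μ̂ ∘ (ν̂M) = id_{JM}`
    (∀ X : V, nhat S η (S.t X A) ≫ mhat S μ X ≫ S.ω (S.t X A) = 𝟙 (S.t S.I (S.t X A))) ∧
    -- semiunit law `(Mω) ∘ μ̂ ∘ (Mν̂) = id_{MJ}`
    (∀ X : V, S.tmap (nhat S η X) (𝟙 A) ≫ mhat S μ X ≫ S.tmap (S.ω X) (𝟙 A)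
      = 𝟙 (S.t (S.t S.I X) A)) := by
  refine ⟨?_, ?_, ?_, ?_, ?_⟩
  · -- naturality of μ̂
    intro X X' f
    simp only [mhat, ← Category.assoc]
    rw [S.γ_nat f (𝟙 A) (𝟙 A), S.tmap_id]
    simp only [Category.assoc]
    congr 1
    rw [← S.tmap_comp, ← S.tmap_comp]; simp
  · -- naturality of ν̂
    intro X X' f
    simp only [nhat, ← Category.assoc]
    rw [S.ℓ_nat f]
    simp only [Category.assoc]
    congr 1
    rw [← S.tmap_comp, ← S.tmap_comp]; simp
  · -- associativity
    intro X
    simp only [mhat]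
    calc S.tmap ((S.γ X A A).hom ≫ S.tmap (𝟙 X) μ) (𝟙 A) ≫ (S.γ X A A).hom ≫ S.tmap (𝟙 X) μ
        = S.tmap (S.γ X A A).hom (𝟙 A) ≫
            (S.tmap (S.tmap (𝟙 X) μ) (𝟙 A) ≫ (S.γ X A A).hom) ≫ S.tmap (𝟙 X) μ := by
          rw [S.tmap_comp_left]; simp only [Category.assoc]
      _ = S.tmap (S.γ X A A).hom (𝟙 A) ≫ (S.γ X (S.t A A) A).hom ≫
            S.tmap (𝟙 X) (S.tmap μ (𝟙 A) ≫ μ) := by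
          rw [S.γ_nat (𝟙 X) μ (𝟙 A), S.tmap_comp_right]
          simp only [Category.assoc]
      _ = S.tmap (S.γ X A A).hom (𝟙 A) ≫ (S.γ X (S.t A A) A).hom ≫
            S.tmap (𝟙 X) (S.γ A A A).hom ≫
            S.tmap (𝟙 X) (S.tmap (𝟙 A) μ) ≫ S.tmap (𝟙 X) μ := by
          rw [hassoc, S.tmap_comp_right, S.tmap_comp_right]
      _ = (S.γ (S.t X A) A A).hom ≫ (S.γ X A (S.t A A)).hom ≫
            S.tmap (𝟙 X) (S.tmap (𝟙 A) μ) ≫ S.tmap (𝟙 X) μ := by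
          rw [reassoc_of% S.pentagon]
      _ = (S.γ (S.t X A) A A).hom ≫
            (S.tmap (𝟙 (S.t X A)) μ ≫ (S.γ X A A).hom) ≫ S.tmap (𝟙 X) μ := by
          congr 1
          rw [← S.tmap_id X A, S.γ_nat (𝟙 X) (𝟙 A) μ]
          simp only [Category.assoc]
      _ = ((S.γ (S.t X A) A A).hom ≫ S.tmap (𝟙 (S.t X A)) μ) ≫
            (S.γ X A A).hom ≫ S.tmap (𝟙 X) μ := by
          simp only [Category.assoc]
  · -- semiunit law (ωM) ∘ μ̂ ∘ (ν̂M) = id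
    intro X
    simp only [mhat, nhat, Category.assoc]
    calc (S.ℓ (S.t X A)).hom ≫ S.tmap (𝟙 (S.t X A)) η ≫
            (S.γ X A A).hom ≫ S.tmap (𝟙 X) μ ≫ S.ω (S.t X A)
        = (S.ℓ (S.t X A)).hom ≫ (S.tmap (𝟙 (S.t X A)) η ≫ (S.γ X A A).hom) ≫
            S.tmap (𝟙 X) μ ≫ S.ω (S.t X A) := by
          simp only [Category.assoc]
      _ = ((S.ℓ (S.t X A)).hom ≫ (S.γ X A S.I).hom) ≫ S.tmap (𝟙 X) (S.tmap (𝟙 A) η) ≫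
            S.tmap (𝟙 X) μ ≫ S.ω (S.t X A) := by
          rw [← S.tmap_id X A, S.γ_nat (𝟙 X) (𝟙 A) η]
          simp only [Category.assoc, S.tmap_id]
      _ = ((S.γ S.I X A).inv ≫ S.tmap (S.ℓ X).hom (𝟙 A) ≫ (S.γ X S.I A).hom ≫
            S.tmap (𝟙 X) (S.ℓ A).hom) ≫ S.tmap (𝟙 X) (S.tmap (𝟙 A) η) ≫
            S.tmap (𝟙 X) μ ≫ S.ω (S.t X A) := by
          rw [← S.ℓ_assoc X A]; simp
      _ = (S.γ S.I X A).inv ≫ S.tmap (S.ℓ X).hom (𝟙 A) ≫ (S.γ X S.I A).hom ≫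
            S.tmap (𝟙 X) ((S.ℓ A).hom ≫ S.tmap (𝟙 A) η ≫ μ ≫ S.ω A) ≫
            (S.γ X S.I A).inv ≫ S.tmap (S.ℓ X).inv (𝟙 A) ≫ (S.γ S.I X A).hom := by
          rw [← S.ω_right X A]
          simp only [S.tmap_comp_right, Category.assoc]
      _ = 𝟙 (S.t S.I (S.t X A)) := by
          rw [hunit_r, S.tmap_id]
          simp only [Category.id_comp, Iso.hom_inv_id_assoc]
          simp only [← Category.assoc]
          rw [Category.assoc (S.γ S.I X A).inv, S.tmap_hom_inv_left (S.ℓ X)]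
          simp
  · -- semiunit law (Mω) ∘ μ̂ ∘ (Mν̂) = id
    intro X
    simp only [mhat, nhat]
    have hω : S.tmap (S.ω X) (𝟙 A) =
        S.tmap (𝟙 X) (S.ω A) ≫ (S.γ X S.I A).inv ≫ S.tmap (S.ℓ X).inv (𝟙 A) := by
      have h1 := S.ω_left X A
      have h2 := S.ω_right X A
      rw [← h2] at h1
      calc S.tmap (S.ω X) (𝟙 A)
          = (S.tmap (S.ω X) (𝟙 A) ≫ (S.γ S.I X A).hom) ≫ (S.γ S.I X A).inv := by simp
        _ = S.tmap (𝟙 X) (S.ω A) ≫ (S.γ X S.I A).inv ≫ S.tmap (S.ℓ X).inv (𝟙 A) := by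
            rw [h1]; simp
    calc S.tmap ((S.ℓ X).hom ≫ S.tmap (𝟙 X) η) (𝟙 A) ≫
            ((S.γ X A A).hom ≫ S.tmap (𝟙 X) μ) ≫ S.tmap (S.ω X) (𝟙 A)
        = S.tmap (S.ℓ X).hom (𝟙 A) ≫ (S.tmap (S.tmap (𝟙 X) η) (𝟙 A) ≫ (S.γ X A A).hom) ≫
            S.tmap (𝟙 X) μ ≫ S.tmap (S.ω X) (𝟙 A) := by
          rw [S.tmap_comp_left]; simp only [Category.assoc]
      _ = S.tmap (S.ℓ X).hom (𝟙 A) ≫ (S.γ X S.I A).hom ≫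
            S.tmap (𝟙 X) (S.tmap η (𝟙 A) ≫ μ ≫ S.ω A) ≫
            (S.γ X S.I A).inv ≫ S.tmap (S.ℓ X).inv (𝟙 A) := by
          rw [S.γ_nat (𝟙 X) η (𝟙 A), hω]
          simp only [S.tmap_comp_right, Category.assoc]
      _ = 𝟙 (S.t (S.t S.I X) A) := by
          rw [hunit_l, S.tmap_id]
          simp only [Category.id_comp, Iso.hom_inv_id_assoc]
          rw [S.tmap_hom_inv_left (S.ℓ X)]
end

section
/- Let (C, Δ, ε) be a semicomonoid in a semiunital semimonoidal category (V, •, I; ω) and let J = I•−. Define natural transformations Δ̂ with components Δ̂_X = γ_{X,C,C}^{-1}∘(X•Δ) : X•C → (X•C)•C and θ̂ with components θ̂_X = ℘_X∘(X•ε) : X•C → X•I → I•X. Then (−•C, Δ̂, ω, θ̂; J) is a J-comonad on V. -/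
open CategoryTheory

universe v u

variable {V : Type u} [Category.{v} V]

section Aux
variable (S : SSM V)

lemma tmap_hom_inv {X Y Z : V} (f : Y ≅ Z) :
    S.tmap (𝟙 X) f.hom ≫ S.tmap (𝟙 X) f.inv = 𝟙 (S.t X Y) := by
  rw [← S.tmap_comp, Iso.hom_inv_id, Category.comp_id, S.tmap_id]

lemma tmap_inv_hom {X Y Z : V} (f : Y ≅ Z) :
    S.tmap (𝟙 X) f.inv ≫ S.tmap (𝟙 X) f.hom = 𝟙 (S.t X Z) := by
  rw [← S.tmap_comp, Iso.inv_hom_id, Category.comp_id, S.tmap_id]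

lemma tmap_hom_inv' {X Y Z : V} (f : Y ≅ Z) :
    S.tmap f.hom (𝟙 X) ≫ S.tmap f.inv (𝟙 X) = 𝟙 (S.t Y X) := by
  rw [← S.tmap_comp, Iso.hom_inv_id, Category.comp_id, S.tmap_id]

lemma tmap_inv_hom' {X Y Z : V} (f : Y ≅ Z) :
    S.tmap f.inv (𝟙 X) ≫ S.tmap f.hom (𝟙 X) = 𝟙 (S.t Z X) := by
  rw [← S.tmap_comp, Iso.inv_hom_id, Category.comp_id, S.tmap_id]

lemma tmap_hom_inv_assoc {X Y Z W : V} (f : Y ≅ Z) (h : S.t X Y ⟶ W) :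
    S.tmap (𝟙 X) f.hom ≫ S.tmap (𝟙 X) f.inv ≫ h = h := by
  rw [← Category.assoc, tmap_hom_inv, Category.id_comp]

lemma tmap_inv_hom_assoc {X Y Z W : V} (f : Y ≅ Z) (h : S.t X Z ⟶ W) :
    S.tmap (𝟙 X) f.inv ≫ S.tmap (𝟙 X) f.hom ≫ h = h := by
  rw [← Category.assoc, tmap_inv_hom, Category.id_comp]

lemma tmap_hom_inv_assoc' {X Y Z W : V} (f : Y ≅ Z) (h : S.t Y X ⟶ W) :
    S.tmap f.hom (𝟙 X) ≫ S.tmap f.inv (𝟙 X) ≫ h = h := by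
  rw [← Category.assoc, tmap_hom_inv', Category.id_comp]

lemma tmap_inv_hom_assoc' {X Y Z W : V} (f : Y ≅ Z) (h : S.t Z X ⟶ W) :
    S.tmap f.inv (𝟙 X) ≫ S.tmap f.hom (𝟙 X) ≫ h = h := by
  rw [← Category.assoc, tmap_inv_hom', Category.id_comp]

/-- Inverse form of the naturality of the associator. -/
lemma γ_inv_nat {X X' Y Y' Z Z' : V} (f : X ⟶ X') (g : Y ⟶ Y') (h : Z ⟶ Z') :
    S.tmap f (S.tmap g h) ≫ (S.γ X' Y' Z').inv = (S.γ X Y Z).inv ≫ S.tmap (S.tmap f g) h := by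
  rw [Iso.comp_inv_eq, Category.assoc, S.γ_nat, Iso.inv_hom_id_assoc]

/-- Swapping a right-tensor morphism past the inverse associator. -/
lemma γ_inv_swap_right {X Y Z Z' : V} (h : Z ⟶ Z') :
    (S.γ X Y Z).inv ≫ S.tmap (𝟙 (S.t X Y)) h
      = S.tmap (𝟙 X) (S.tmap (𝟙 Y) h) ≫ (S.γ X Y Z').inv := by
  have := γ_inv_nat S (𝟙 X) (𝟙 Y) h
  rw [S.tmap_id] at this
  exact this.symm

/-- Swapping a middle-tensor morphism past the inverse associator. -/
lemma γ_inv_swap_mid {X Y Y' Z : V} (h : Y ⟶ Y') :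
    (S.γ X Y Z).inv ≫ S.tmap (S.tmap (𝟙 X) h) (𝟙 Z)
      = S.tmap (𝟙 X) (S.tmap h (𝟙 Z)) ≫ (S.γ X Y' Z).inv :=
  (γ_inv_nat S (𝟙 X) h (𝟙 Z)).symm

/-- Inverse form of the naturality of `ℓ`. -/
lemma ℓ_inv_nat {X Y : V} (f : X ⟶ Y) :
    S.tmap f (𝟙 S.I) ≫ (S.ℓ Y).inv = (S.ℓ X).inv ≫ S.tmap (𝟙 S.I) f := by
  rw [Iso.comp_inv_eq, Category.assoc, S.ℓ_nat, Iso.inv_hom_id_assoc]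

/-- Inverse form of the pentagon identity. -/
lemma pentagon_inv (W X Y Z : V) :
    (S.γ W X (S.t Y Z)).inv ≫ (S.γ (S.t W X) Y Z).inv
      = S.tmap (𝟙 W) (S.γ X Y Z).inv ≫ (S.γ W (S.t X Y) Z).inv
        ≫ S.tmap (S.γ W X Y).inv (𝟙 Z) := by
  rw [← cancel_epi ((S.γ (S.t W X) Y Z).hom ≫ (S.γ W X (S.t Y Z)).hom)]
  simp only [Category.assoc, Iso.hom_inv_id, Iso.hom_inv_id_assoc, Category.comp_id]
  slice_rhs 1 2 => rw [← S.pentagon]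
  simp only [Category.assoc, tmap_hom_inv_assoc, Iso.hom_inv_id_assoc,
    tmap_hom_inv', tmap_hom_inv_assoc', Category.comp_id]

/-- Expression for `(ℓ (X • Y)).inv` derived from `ℓ_assoc`. -/
lemma ℓ_t_inv (X Y : V) :
    (S.ℓ (S.t X Y)).inv
      = (S.γ X Y S.I).hom ≫ S.tmap (𝟙 X) (S.ℓ Y).inv ≫ (S.γ X S.I Y).inv
        ≫ S.tmap (S.ℓ X).inv (𝟙 Y) ≫ (S.γ S.I X Y).hom := by
  have h : (S.ℓ (S.t X Y)).hom ≫ (S.γ X Y S.I).hom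
      = (S.γ S.I X Y).inv ≫ S.tmap (S.ℓ X).hom (𝟙 Y) ≫ (S.γ X S.I Y).hom
        ≫ S.tmap (𝟙 X) (S.ℓ Y).hom := by
    rw [Iso.eq_inv_comp, S.ℓ_assoc]
  rw [← cancel_epi (S.ℓ (S.t X Y)).hom, Iso.hom_inv_id]
  slice_rhs 1 2 => rw [h]
  simp only [Category.assoc, tmap_hom_inv_assoc, Iso.hom_inv_id_assoc,
    tmap_hom_inv_assoc', Iso.inv_hom_id]

end Aux

/-- `Δ̂_X = γ_{X,C,C}⁻¹ ∘ (X • Δ)`. -/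
def dhat (S : SSM V) {C : V} (Δ : C ⟶ S.t C C) (X : V) : S.t X C ⟶ S.t (S.t X C) C :=
  S.tmap (𝟙 X) Δ ≫ (S.γ X C C).inv

/-- `θ̂_X = ℘_X ∘ (X • ε)`. -/
def that (S : SSM V) {C : V} (ε : C ⟶ S.I) (X : V) : S.t X C ⟶ S.t S.I X :=
  S.tmap (𝟙 X) ε ≫ (S.ℓ X).inv

/-- For a semicomonoid `(C, Δ, ε)` in a semiunital semimonoidal category,
`(− • C, Δ̂, ω, θ̂; J)` is a `J`-comonad (with `J = I • −`): `Δ̂` and `θ̂` are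
natural and satisfy the coassociativity and semicounit laws. -/
theorem semicomonoid_gives_JComonad (S : SSM V) (C : V)
    (Δ : C ⟶ S.t C C) (ε : C ⟶ S.I)
    (hcoassoc : Δ ≫ S.tmap Δ (𝟙 C) ≫ (S.γ C C C).hom = Δ ≫ S.tmap (𝟙 C) Δ)
    (hcounit_l : Δ ≫ S.tmap ε (𝟙 C) = S.ω C)
    (hcounit_r : Δ ≫ S.tmap (𝟙 C) ε = S.ω C ≫ (S.ℓ C).hom) :
    -- naturality of `Δ̂`
    (∀ (X X' : V) (f : X ⟶ X'),
      S.tmap f (𝟙 C) ≫ dhat S Δ X' = dhat S Δ X ≫ S.tmap (S.tmap f (𝟙 C)) (𝟙 C)) ∧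
    -- naturality of `θ̂`
    (∀ (X X' : V) (f : X ⟶ X'),
      S.tmap f (𝟙 C) ≫ that S ε X' = that S ε X ≫ S.tmap (𝟙 S.I) f) ∧
    -- coassociativity: `Δ̂C ∘ Δ̂ = CΔ̂ ∘ Δ̂`
    (∀ X : V, dhat S Δ X ≫ dhat S Δ (S.t X C) = dhat S Δ X ≫ S.tmap (dhat S Δ X) (𝟙 C)) ∧
    -- semicounit law `θ̂C ∘ Δ̂ = ωC`
    (∀ X : V, dhat S Δ X ≫ that S ε (S.t X C) = S.ω (S.t X C)) ∧
    -- semicounit law `Cθ̂ ∘ Δ̂ = Cω`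
    (∀ X : V, dhat S Δ X ≫ S.tmap (that S ε X) (𝟙 C) = S.tmap (S.ω X) (𝟙 C)) := by
  refine ⟨?_, ?_, ?_, ?_, ?_⟩
  · -- naturality of Δ̂
    intro X X' f
    unfold dhat
    rw [Category.assoc, ← γ_inv_nat]
    slice_lhs 1 2 => rw [← S.tmap_comp]
    slice_rhs 1 2 => rw [← S.tmap_comp]
    simp only [S.tmap_id, Category.id_comp, Category.comp_id]
  · -- naturality of θ̂
    intro X X' f
    unfold that
    rw [Category.assoc, ← ℓ_inv_nat]
    slice_lhs 1 2 => rw [← S.tmap_comp]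
    slice_rhs 1 2 => rw [← S.tmap_comp]
    simp only [Category.id_comp, Category.comp_id]
  · -- coassociativity
    intro X
    have h2 : Δ ≫ S.tmap Δ (𝟙 C) = (Δ ≫ S.tmap (𝟙 C) Δ) ≫ (S.γ C C C).inv := by
      rw [Iso.eq_comp_inv, Category.assoc, hcoassoc]
    unfold dhat
    rw [show S.tmap (S.tmap (𝟙 X) Δ ≫ (S.γ X C C).inv) (𝟙 C)
        = S.tmap (S.tmap (𝟙 X) Δ) (𝟙 C) ≫ S.tmap (S.γ X C C).inv (𝟙 C) by
      rw [← S.tmap_comp, Category.comp_id]]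
    slice_lhs 2 3 => rw [γ_inv_swap_right]
    slice_rhs 2 3 => rw [γ_inv_swap_mid]
    slice_lhs 3 4 => rw [pentagon_inv]
    slice_lhs 1 2 => rw [← S.tmap_comp]
    slice_lhs 1 2 => rw [← S.tmap_comp]
    slice_rhs 1 2 => rw [← S.tmap_comp]
    rw [h2]
    simp only [Category.assoc, Category.id_comp, Category.comp_id]
  · -- counit law θ̂C ∘ Δ̂ = ωC
    intro X
    unfold dhat that
    slice_lhs 2 3 => rw [γ_inv_swap_right]
    slice_lhs 1 2 => rw [← S.tmap_comp]
    rw [Category.id_comp, hcounit_r, ℓ_t_inv,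
      show S.tmap (𝟙 X) (S.ω C ≫ (S.ℓ C).hom)
        = S.tmap (𝟙 X) (S.ω C) ≫ S.tmap (𝟙 X) (S.ℓ C).hom by
      rw [← S.tmap_comp, Category.comp_id]]
    simp only [Category.assoc, Iso.inv_hom_id_assoc, tmap_hom_inv_assoc]
    exact S.ω_right X C
  · -- counit law Cθ̂ ∘ Δ̂ = Cω
    intro X
    unfold dhat that
    rw [show S.tmap (S.tmap (𝟙 X) ε ≫ (S.ℓ X).inv) (𝟙 C)
        = S.tmap (S.tmap (𝟙 X) ε) (𝟙 C) ≫ S.tmap (S.ℓ X).inv (𝟙 C) by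
      rw [← S.tmap_comp, Category.comp_id]]
    slice_lhs 2 3 => rw [γ_inv_swap_mid]
    slice_lhs 1 2 => rw [← S.tmap_comp]
    rw [Category.id_comp, hcounit_l, ← cancel_mono (S.γ S.I X C).hom, S.ω_left]
    simp only [Category.assoc]
    exact S.ω_right X C
end

section
/- Let (C, Δ, ε) be a semicomonoid and (A, μ, η) a unital semimonoid (ω_A is an isomorphism) in a semiunital semimonoidal category (V, •, I; ω). Then the hom-set Hom_V(C, A) is a monoid under the convolution product f * g := μ∘(f•g)∘Δ, with two-sided unit element e := η∘ε; i.e. * is associative and e * f = f = f * e for all f ∈ Hom_V(C, A). -/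
open CategoryTheory

universe v u

/-- For a semicomonoid `(C, Δ, ε)` and a unital semimonoid `(A, μ, η)` in a
semiunital semimonoidal category, `Hom(C, A)` is a monoid under the
convolution product `f * g = μ ∘ (f • g) ∘ Δ` with unit `e = η ∘ ε`. -/
theorem convolution_monoid {V : Type u} [Category.{v} V] (S : SSM V)
    (C A : V)
    (Δ : C ⟶ S.t C C) (ε : C ⟶ S.I)
    (hcoassoc : Δ ≫ S.tmap Δ (𝟙 C) ≫ (S.γ C C C).hom = Δ ≫ S.tmap (𝟙 C) Δ)
    (hcounit_l : Δ ≫ S.tmap ε (𝟙 C) = S.ω C)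
    (hcounit_r : Δ ≫ S.tmap (𝟙 C) ε = S.ω C ≫ (S.ℓ C).hom)
    (μ : S.t A A ⟶ A) (η : S.I ⟶ A)
    (hassoc : S.tmap μ (𝟙 A) ≫ μ = (S.γ A A A).hom ≫ S.tmap (𝟙 A) μ ≫ μ)
    (hunit_l : S.tmap η (𝟙 A) ≫ μ ≫ S.ω A = 𝟙 (S.t S.I A))
    (hunit_r : (S.ℓ A).hom ≫ S.tmap (𝟙 A) η ≫ μ ≫ S.ω A = 𝟙 (S.t S.I A))
    [IsIso (S.ω A)] :
    -- associativity of the convolution product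
    (∀ f g h : C ⟶ A,
      Δ ≫ S.tmap (Δ ≫ S.tmap f g ≫ μ) h ≫ μ
        = Δ ≫ S.tmap f (Δ ≫ S.tmap g h ≫ μ) ≫ μ) ∧
    -- `e = η ∘ ε` is a left unit
    (∀ f : C ⟶ A, Δ ≫ S.tmap (ε ≫ η) f ≫ μ = f) ∧
    -- `e = η ∘ ε` is a right unit
    (∀ f : C ⟶ A, Δ ≫ S.tmap f (ε ≫ η) ≫ μ = f) := by
  have hinv_l : S.tmap η (𝟙 A) ≫ μ = inv (S.ω A) := by
    have := congrArg (fun x => x ≫ inv (S.ω A)) hunit_l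
    simpa using this
  have hinv_r : (S.ℓ A).hom ≫ S.tmap (𝟙 A) η ≫ μ = inv (S.ω A) := by
    have := congrArg (fun x => x ≫ inv (S.ω A)) hunit_r
    simpa using this
  refine ⟨?_, ?_, ?_⟩
  · intro f g h
    have e1 : S.tmap (Δ ≫ S.tmap f g ≫ μ) h
        = S.tmap Δ (𝟙 C) ≫ S.tmap (S.tmap f g) h ≫ S.tmap μ (𝟙 A) := by
      rw [← S.tmap_comp, ← S.tmap_comp]; simp
    have e2 : S.tmap f (Δ ≫ S.tmap g h ≫ μ)
        = S.tmap (𝟙 C) Δ ≫ S.tmap f (S.tmap g h) ≫ S.tmap (𝟙 A) μ := by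
      rw [← S.tmap_comp, ← S.tmap_comp]; simp
    rw [e1, e2]
    have e3 : S.tmap (S.tmap f g) h ≫ S.tmap μ (𝟙 A) ≫ μ
        = S.tmap (S.tmap f g) h ≫ (S.γ A A A).hom ≫ S.tmap (𝟙 A) μ ≫ μ := by
      rw [hassoc]
    have e4 : S.tmap (S.tmap f g) h ≫ (S.γ A A A).hom
        = (S.γ C C C).hom ≫ S.tmap f (S.tmap g h) := S.γ_nat f g h
    calc Δ ≫ (S.tmap Δ (𝟙 C) ≫ S.tmap (S.tmap f g) h ≫ S.tmap μ (𝟙 A)) ≫ μ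
        = Δ ≫ S.tmap Δ (𝟙 C) ≫ S.tmap (S.tmap f g) h ≫ (S.γ A A A).hom
            ≫ S.tmap (𝟙 A) μ ≫ μ := by
          simp only [Category.assoc]
          rw [← Category.assoc (S.tmap (S.tmap f g) h), ← Category.assoc (S.tmap (S.tmap f g) h)]
          simp only [Category.assoc]
          rw [hassoc]
      _ = Δ ≫ S.tmap Δ (𝟙 C) ≫ (S.γ C C C).hom ≫ S.tmap f (S.tmap g h)
            ≫ S.tmap (𝟙 A) μ ≫ μ := by
          rw [← Category.assoc (S.tmap (S.tmap f g) h), e4]; simp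
      _ = (Δ ≫ S.tmap Δ (𝟙 C) ≫ (S.γ C C C).hom) ≫ S.tmap f (S.tmap g h)
            ≫ S.tmap (𝟙 A) μ ≫ μ := by simp
      _ = Δ ≫ (S.tmap (𝟙 C) Δ ≫ S.tmap f (S.tmap g h) ≫ S.tmap (𝟙 A) μ) ≫ μ := by
          rw [hcoassoc]; simp
  · intro f
    have e1 : S.tmap (ε ≫ η) f = S.tmap ε (𝟙 C) ≫ S.tmap (𝟙 S.I) f ≫ S.tmap η (𝟙 A) := by
      rw [← S.tmap_comp, ← S.tmap_comp]; simp
    rw [e1]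
    rw [← Category.assoc, ← Category.assoc, hcounit_l]
    simp only [Category.assoc]
    slice_lhs 1 2 => rw [← S.ω_nat f]
    slice_lhs 3 4 => rw [hinv_l]
    simp
  · intro f
    have e1 : S.tmap f (ε ≫ η) = S.tmap (𝟙 C) ε ≫ S.tmap f (𝟙 S.I) ≫ S.tmap (𝟙 A) η := by
      rw [← S.tmap_comp, ← S.tmap_comp]; simp
    rw [e1]
    rw [← Category.assoc, ← Category.assoc, hcounit_r]
    have e2 : (S.ℓ C).hom ≫ S.tmap f (𝟙 S.I) = S.tmap (𝟙 S.I) f ≫ (S.ℓ A).hom :=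
      (S.ℓ_nat f).symm
    simp only [Category.assoc]
    slice_lhs 2 3 => rw [e2]
    slice_lhs 1 2 => rw [← S.ω_nat f]
    slice_lhs 3 5 => rw [hinv_r]
    simp
end
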